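/- Let B = 2, d = 2, and work over ℝ with A_0 = R_{−π/3} and A_1 = R_{π/3}, where R_θ is the 2×2 rotation matrix ((cos θ, −sin θ), (sin θ, cos θ)), and C = e_1 = (1,0)^T. For K ≥ 0 set y_{2K} = Σ_{j=1}^{K} 4^{−j} (binary expansion (0.(01)^K)_2) and x_{2K+2} = 3/4 + y_{2K}/4 (binary expansion (0.11(01)^K)_2). Then the running sums satisfy S_{2K}(y_{2K}) = K · R_{−2π/3} e_1 + e_1 and S_{2K+2}(x_{2K+2}) = (K+1) · e_1. In particular sup_{x∈[0,1]} ‖S_K(x)‖ ≥ ⌊K/2⌋, so for this representation (whose matrices are orthogonal, hence satisfy ‖A_w‖ = 1 for all words w in the Euclidean operator norm) the running sums grow linearly in K, showing that the bound O(K λ^K) of the noise lemma (with λ = 1) has the right order of growth. -/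

import Mathlib

open scoped Classical BigOperators

noncomputable section

/-- The rotation matrix of angle `θ`. -/
def Rot (θ : ℝ) : Matrix (Fin 2) (Fin 2) ℝ :=
  !![Real.cos θ, -Real.sin θ; Real.sin θ, Real.cos θ]

/-- `A_w = A_{w_1} ⋯ A_{w_K}` for a word `w` over the binary alphabet (real matrices). -/
def wordProdR {B d : ℕ} (A : Fin B → Matrix (Fin d) (Fin d) ℝ) {K : ℕ}
    (w : Fin K → Fin B) : Matrix (Fin d) (Fin d) ℝ :=
  ((List.ofFn w).map A).prod

/-- `(0.w)_B = Σ_{k=1}^K w_k B^{-k}`. -/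
def wordValR {B K : ℕ} (w : Fin K → Fin B) : ℝ :=
  ∑ k : Fin K, (w k : ℝ) / (B : ℝ) ^ ((k : ℕ) + 1)

/-- The running sum `S_K(x) = Σ_{|w|=K, (0.w)_B ≤ x} A_w C` (real case). -/
def runSumR {B d : ℕ} (A : Fin B → Matrix (Fin d) (Fin d) ℝ) (C : Fin d → ℝ)
    (K : ℕ) (x : ℝ) : Fin d → ℝ :=
  ∑ w : Fin K → Fin B, if wordValR w ≤ x then (wordProdR A w).mulVec C else 0

/-- The Euclidean norm on `ℝ²`. -/
def eucNorm (v : Fin 2 → ℝ) : ℝ :=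
  Real.sqrt (v 0 ^ 2 + v 1 ^ 2)

/- ### Auxiliary lemmas -/

open scoped Matrix

lemma Rot_mul (a b : ℝ) : Rot a * Rot b = Rot (a + b) := by
  ext i j
  fin_cases i <;> fin_cases j <;>
    simp [Rot, Matrix.mul_apply, Fin.sum_univ_two, Real.cos_add, Real.sin_add] <;> ring

lemma Rot_zero : Rot 0 = 1 := by
  ext i j
  fin_cases i <;> fin_cases j <;> simp [Rot, Matrix.one_apply]

lemma wordVal_cons {K : ℕ} (a : Fin 2) (v : Fin K → Fin 2) :
    wordValR (Fin.cons a v) = (a : ℝ) / 2 + wordValR v / 2 := by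
  unfold wordValR
  rw [Fin.sum_univ_succ, Finset.sum_div]
  congr 1
  · norm_num
  · refine Finset.sum_congr rfl fun k _ => ?_
    simp only [Fin.cons_succ, Fin.val_succ]
    rw [pow_succ]
    push_cast
    ring

lemma wordVal_nonneg {B K : ℕ} (w : Fin K → Fin B) : 0 ≤ wordValR w := by
  refine Finset.sum_nonneg fun k _ => ?_
  positivity

lemma wordProd_cons {K : ℕ} (A : Fin 2 → Matrix (Fin 2) (Fin 2) ℝ) (a : Fin 2)
    (v : Fin K → Fin 2) : wordProdR A (Fin.cons a v) = A a * wordProdR A v := by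
  simp [wordProdR, List.ofFn_succ]

lemma mulVec_sum' {ι : Type*} (s : Finset ι) (M : Matrix (Fin 2) (Fin 2) ℝ)
    (f : ι → Fin 2 → ℝ) : M.mulVec (∑ i ∈ s, f i) = ∑ i ∈ s, M.mulVec (f i) :=
  map_sum M.mulVecLin f s

lemma runSum_succ (A : Fin 2 → Matrix (Fin 2) (Fin 2) ℝ) (C : Fin 2 → ℝ) (K : ℕ) (x : ℝ) :
    runSumR A C (K + 1) x =
      (A 0).mulVec (runSumR A C K (2 * x)) + (A 1).mulVec (runSumR A C K (2 * x - 1)) := by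
  unfold runSumR
  rw [← (Fin.consEquiv (fun _ : Fin (K + 1) => Fin 2)).sum_comp, Fintype.sum_prod_type,
    Fin.sum_univ_two, mulVec_sum', mulVec_sum']
  congr 1
  · refine Finset.sum_congr rfl fun v _ => ?_
    rw [show (Fin.consEquiv fun _ => Fin 2) (0, v) = Fin.cons 0 v from rfl,
      wordVal_cons, wordProd_cons]
    by_cases h : wordValR v ≤ 2 * x
    · rw [if_pos (by simp only [Fin.val_zero, Nat.cast_zero]; linarith), if_pos h,
        ← Matrix.mulVec_mulVec]
    · rw [if_neg (by simp only [Fin.val_zero, Nat.cast_zero]; intro hc; exact h (by linarith)),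
        if_neg h, Matrix.mulVec_zero]
  · refine Finset.sum_congr rfl fun v _ => ?_
    rw [show (Fin.consEquiv fun _ => Fin 2) (1, v) = Fin.cons 1 v from rfl,
      wordVal_cons, wordProd_cons]
    by_cases h : wordValR v ≤ 2 * x - 1
    · rw [if_pos (by simp only [Fin.val_one, Nat.cast_one]; linarith), if_pos h,
        ← Matrix.mulVec_mulVec]
    · rw [if_neg (by simp only [Fin.val_one, Nat.cast_one]; intro hc; exact h (by linarith)),
        if_neg h, Matrix.mulVec_zero]

lemma runSum_zero (A : Fin 2 → Matrix (Fin 2) (Fin 2) ℝ) (C : Fin 2 → ℝ) (x : ℝ) (hx : 0 ≤ x) :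
    runSumR A C 0 x = C := by
  unfold runSumR
  rw [Finset.univ_unique, Finset.sum_singleton]
  rw [if_pos (by simpa [wordValR] using hx)]
  simp [wordProdR, Matrix.one_mulVec]

lemma runSum_neg (A : Fin 2 → Matrix (Fin 2) (Fin 2) ℝ) (C : Fin 2 → ℝ) (K : ℕ) (x : ℝ)
    (hx : x < 0) : runSumR A C K x = 0 := by
  unfold runSumR
  refine Finset.sum_eq_zero fun w _ => ?_
  rw [if_neg (by linarith [wordVal_nonneg w])]

lemma runSum_one_le (A : Fin 2 → Matrix (Fin 2) (Fin 2) ℝ) (hA : A 0 + A 1 = 1)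
    (C : Fin 2 → ℝ) : ∀ (K : ℕ) (x : ℝ), 1 ≤ x → runSumR A C K x = C := by
  intro K
  induction K with
  | zero => exact fun x hx => runSum_zero A C x (by linarith)
  | succ K ih =>
    intro x hx
    rw [runSum_succ, ih (2 * x) (by linarith), ih (2 * x - 1) (by linarith),
      ← Matrix.add_mulVec, hA, Matrix.one_mulVec]

lemma eucNorm_eq (v : Fin 2 → ℝ) :
    eucNorm v = ‖(WithLp.toLp 2 v : EuclideanSpace ℝ (Fin 2))‖ := by
  rw [EuclideanSpace.norm_eq]
  simp [eucNorm, Fin.sum_univ_two, Real.norm_eq_abs, sq_abs]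

lemma eucNorm_sum_le {ι : Type*} (s : Finset ι) (f : ι → Fin 2 → ℝ) :
    eucNorm (∑ i ∈ s, f i) ≤ ∑ i ∈ s, eucNorm (f i) := by
  simp only [eucNorm_eq, WithLp.toLp_sum]
  exact norm_sum_le (E := EuclideanSpace ℝ (Fin 2)) s (fun i => WithLp.toLp 2 (f i))

lemma eucNorm_nonneg (v : Fin 2 → ℝ) : 0 ≤ eucNorm v := Real.sqrt_nonneg _

lemma eucNorm_smul_e1 (c : ℝ) (hc : 0 ≤ c) : eucNorm (c • (![1, 0] : Fin 2 → ℝ)) = c := by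
  have h0 : (c • (![1, 0] : Fin 2 → ℝ)) 0 = c := by simp
  have h1 : (c • (![1, 0] : Fin 2 → ℝ)) 1 = 0 := by simp
  rw [eucNorm, h0, h1, show c ^ 2 + 0 ^ 2 = c ^ 2 by ring, Real.sqrt_sq hc]

/-- triangular tiling example: for `B = 2`, `A_0 = R_{-π/3}`,
`A_1 = R_{π/3}`, `C = e₁`, the running sums evaluated at `y_{2K} = (0.(01)^K)_2`
and `x_{2K+2} = (0.11(01)^K)_2` grow linearly in `K`, so
`sup_{x ∈ [0,1]} ‖S_K(x)‖ ≥ ⌊K/2⌋`. -/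
theorem triangular_tiling_noise_growth (A : Fin 2 → Matrix (Fin 2) (Fin 2) ℝ)
    (hA0 : A 0 = Rot (-(Real.pi / 3))) (hA1 : A 1 = Rot (Real.pi / 3))
    (C : Fin 2 → ℝ) (hC : C = ![1, 0])
    (y : ℕ → ℝ) (hy : ∀ K, y K = ∑ j ∈ Finset.range K, ((1 : ℝ) / 4) ^ (j + 1))
    (x : ℕ → ℝ) (hx : ∀ K, x K = 3 / 4 + y K / 4) :
    (∀ K : ℕ, runSumR A C (2 * K) (y K) =
        (K : ℝ) • (Rot (-(2 * Real.pi / 3))).mulVec ![1, 0] + ![1, 0]) ∧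
    (∀ K : ℕ, runSumR A C (2 * K + 2) (x K) =
        ((K : ℝ) + 1) • (![1, 0] : Fin 2 → ℝ)) ∧
    (∀ K : ℕ, ((K / 2 : ℕ) : ℝ) ≤ ⨆ z : Set.Icc (0:ℝ) 1, eucNorm (runSumR A C K z)) := by
  subst hC
  -- basic matrix identities
  have hAsum : A 0 + A 1 = 1 := by
    rw [hA0, hA1]
    ext i j
    fin_cases i <;> fin_cases j <;>
      simp [Rot, Matrix.one_apply, Real.cos_neg, Real.sin_neg, Real.cos_pi_div_three] <;>
        norm_num
  have h01 : A 0 * A 1 = 1 := by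
    rw [hA0, hA1, Rot_mul, show -(Real.pi / 3) + Real.pi / 3 = 0 by ring, Rot_zero]
  have h10 : A 1 * A 0 = 1 := by
    rw [hA0, hA1, Rot_mul, show Real.pi / 3 + -(Real.pi / 3) = 0 by ring, Rot_zero]
  have h00 : A 0 * A 0 = Rot (-(2 * Real.pi / 3)) := by
    rw [hA0, Rot_mul, show -(Real.pi / 3) + -(Real.pi / 3) = -(2 * Real.pi / 3) by ring]
  have h11 : A 1 * A 1 = Rot (Real.pi / 3 + Real.pi / 3) := by
    rw [hA1, Rot_mul]
  have h110 : A 1 * A 1 * A 0 = A 1 := by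
    rw [hA1, hA0, Rot_mul, Rot_mul,
      show Real.pi / 3 + Real.pi / 3 + -(Real.pi / 3) = Real.pi / 3 by ring]
  have cancel1 : Rot (-(Real.pi / 3)) *ᵥ ![1, 0] =
      -(Rot (Real.pi / 3 + Real.pi / 3) *ᵥ (![1, 0] : Fin 2 → ℝ)) := by
    have hang : Real.pi / 3 + Real.pi / 3 = Real.pi - Real.pi / 3 := by ring
    funext i
    rw [hang]
    fin_cases i <;>
      simp [Rot, Matrix.mulVec, dotProduct, Fin.sum_univ_two, Real.cos_neg,
        Real.sin_neg, Real.cos_pi_sub, Real.sin_pi_sub]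
  have cancel2 : Rot (-(Real.pi / 3)) *ᵥ ![1, 0] =
      (![1, 0] : Fin 2 → ℝ) - Rot (Real.pi / 3) *ᵥ (![1, 0] : Fin 2 → ℝ) := by
    funext i
    fin_cases i <;>
      simp [Rot, Matrix.mulVec, dotProduct, Fin.sum_univ_two, Real.cos_neg,
        Real.sin_neg, Real.cos_pi_div_three] <;> norm_num
  -- facts about y and x
  have hy0 : y 0 = 0 := by simp [hy]
  have hystep : ∀ K, y (K + 1) = 1 / 4 + y K / 4 := by
    intro K
    rw [hy (K + 1), hy K, Finset.sum_range_succ']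
    have h4 : ∀ j : ℕ, ((1 : ℝ) / 4) ^ (j + 1 + 1) = (1 / 4) ^ (j + 1) * (1 / 4) :=
      fun j => by ring
    simp_rw [h4]
    rw [← Finset.sum_mul]
    ring
  have hyb : ∀ K, 0 ≤ y K ∧ y K ≤ 1 / 3 := by
    intro K
    induction K with
    | zero => rw [hy0]; norm_num
    | succ K ih => rw [hystep]; constructor <;> linarith [ih.1, ih.2]
  -- Part 1
  have part1 : ∀ K : ℕ, runSumR A ![1, 0] (2 * K) (y K) =
      (K : ℝ) • (Rot (-(2 * Real.pi / 3))).mulVec ![1, 0] + ![1, 0] := by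
    intro K
    induction K with
    | zero =>
      rw [Nat.mul_zero, hy0, runSum_zero A ![1, 0] 0 le_rfl]
      simp
    | succ K ih =>
      have hKy := hyb K
      have h1 : runSumR A ![1, 0] (2 * K + 1) (2 * y (K + 1)) =
          (A 0).mulVec ![1, 0] + (A 1).mulVec (runSumR A ![1, 0] (2 * K) (y K)) := by
        rw [runSum_succ,
          runSum_one_le A hAsum ![1, 0] (2 * K) (2 * (2 * y (K + 1)))
            (by rw [hystep]; linarith [hKy.1]),
          show 2 * (2 * y (K + 1)) - 1 = y K by rw [hystep]; ring]
      rw [show 2 * (K + 1) = (2 * K + 1) + 1 by ring, runSum_succ,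
        runSum_neg A ![1, 0] (2 * K + 1) (2 * y (K + 1) - 1) (by rw [hystep]; linarith [hKy.2]),
        Matrix.mulVec_zero, add_zero, h1, Matrix.mulVec_add, Matrix.mulVec_mulVec,
        Matrix.mulVec_mulVec, h00, h01, Matrix.one_mulVec, ih]
      push_cast
      module
  -- Part 2
  have part2 : ∀ K : ℕ, runSumR A ![1, 0] (2 * K + 2) (x K) =
      ((K : ℝ) + 1) • (![1, 0] : Fin 2 → ℝ) := by
    intro K
    have hKy := hyb K
    have h1 : runSumR A ![1, 0] (2 * K + 1) (2 * x K - 1) =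
        (A 0).mulVec ![1, 0] + (A 1).mulVec (runSumR A ![1, 0] (2 * K) (y K)) := by
      rw [runSum_succ,
        runSum_one_le A hAsum ![1, 0] (2 * K) (2 * (2 * x K - 1))
          (by rw [hx]; linarith [hKy.1]),
        show 2 * (2 * x K - 1) - 1 = y K by rw [hx]; ring]
    rw [show 2 * K + 2 = (2 * K + 1) + 1 by ring, runSum_succ,
      runSum_one_le A hAsum ![1, 0] (2 * K + 1) (2 * x K) (by rw [hx]; linarith [hKy.1]),
      h1, part1 K, Matrix.mulVec_add, Matrix.mulVec_mulVec, h10, Matrix.one_mulVec,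
      Matrix.mulVec_mulVec, h11, Matrix.mulVec_add, Matrix.mulVec_smul,
      Matrix.mulVec_mulVec, Rot_mul,
      show Real.pi / 3 + Real.pi / 3 + -(2 * Real.pi / 3) = 0 by ring, Rot_zero,
      Matrix.one_mulVec, hA0, cancel1]
    module
  -- auxiliary closed forms for the odd case
  have hS1 : ∀ K, runSumR A ![1, 0] (2 * K + 1) (y K) =
      (A 0).mulVec (runSumR A ![1, 0] (2 * K) (2 * y K)) := by
    intro K
    rw [runSum_succ, runSum_neg A ![1, 0] (2 * K) (2 * y K - 1) (by linarith [(hyb K).2]),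
      Matrix.mulVec_zero, add_zero]
  have hV : ∀ K, runSumR A ![1, 0] (2 * K) (2 * y K) =
      (K : ℝ) • (A 0).mulVec ![1, 0] + ![1, 0] := by
    intro K
    induction K with
    | zero =>
      rw [Nat.mul_zero, hy0, mul_zero, runSum_zero A ![1, 0] 0 le_rfl]
      simp
    | succ K ih =>
      have hKy := hyb K
      rw [show 2 * (K + 1) = (2 * K + 1) + 1 by ring, runSum_succ,
        runSum_one_le A hAsum ![1, 0] (2 * K + 1) (2 * (2 * y (K + 1)))
          (by rw [hystep]; linarith [hKy.1]),
        show 2 * (2 * y (K + 1)) - 1 = y K by rw [hystep]; ring,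
        hS1 K, ih, Matrix.mulVec_mulVec, h10, Matrix.one_mulVec]
      push_cast
      module
  have hodd : ∀ K, runSumR A ![1, 0] (2 * K + 3) (x K) =
      ((K : ℝ) + 2) • (![1, 0] : Fin 2 → ℝ) := by
    intro K
    have hKy := hyb K
    have hS2 : runSumR A ![1, 0] (2 * K + 2) (2 * x K - 1) =
        (A 0).mulVec ![1, 0] +
          (A 1).mulVec ((A 0).mulVec (runSumR A ![1, 0] (2 * K) (2 * y K))) := by
      rw [show 2 * K + 2 = (2 * K + 1) + 1 by ring, runSum_succ,
        runSum_one_le A hAsum ![1, 0] (2 * K + 1) (2 * (2 * x K - 1))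
          (by rw [hx]; linarith [hKy.1]),
        show 2 * (2 * x K - 1) - 1 = y K by rw [hx]; ring, hS1 K]
    rw [show 2 * K + 3 = (2 * K + 2) + 1 by ring, runSum_succ,
      runSum_one_le A hAsum ![1, 0] (2 * K + 2) (2 * x K) (by rw [hx]; linarith [hKy.1]),
      hS2, hV K, Matrix.mulVec_add, Matrix.mulVec_mulVec, h10, Matrix.one_mulVec,
      Matrix.mulVec_mulVec, Matrix.mulVec_mulVec, h110, Matrix.mulVec_add,
      Matrix.mulVec_smul, Matrix.mulVec_mulVec, h10, Matrix.one_mulVec, hA0, hA1, cancel2]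
    push_cast
    module
  refine ⟨part1, part2, ?_⟩
  -- Part 3
  have hxb : ∀ K, 0 ≤ x K ∧ x K ≤ 1 := by
    intro K
    rw [hx]
    constructor <;> linarith [(hyb K).1, (hyb K).2]
  intro K
  have hbdd : BddAbove (Set.range fun z : Set.Icc (0 : ℝ) 1 =>
      eucNorm (runSumR A ![1, 0] K z)) := by
    refine ⟨∑ w : Fin K → Fin 2, eucNorm ((wordProdR A w).mulVec ![1, 0]), ?_⟩
    rintro r ⟨z, rfl⟩
    refine le_trans (eucNorm_sum_le _ _) (Finset.sum_le_sum fun w _ => ?_)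
    split_ifs with h
    · exact le_rfl
    · have h0 : eucNorm (0 : Fin 2 → ℝ) = 0 := by simp [eucNorm]
      rw [h0]
      exact eucNorm_nonneg _
  have hsup : ∀ z : ℝ, z ∈ Set.Icc (0 : ℝ) 1 →
      eucNorm (runSumR A ![1, 0] K z) ≤
        ⨆ z : Set.Icc (0 : ℝ) 1, eucNorm (runSumR A ![1, 0] K z) :=
    fun z hz => le_ciSup hbdd ⟨z, hz⟩
  have hnn : (0 : ℝ) ≤ ⨆ z : Set.Icc (0 : ℝ) 1, eucNorm (runSumR A ![1, 0] K z) :=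
    Real.iSup_nonneg fun z => eucNorm_nonneg _
  rcases Nat.even_or_odd K with ⟨m, hm⟩ | ⟨m, hm⟩
  · rcases Nat.eq_zero_or_pos m with rfl | hmpos
    · subst hm
      simpa using hnn
    · obtain ⟨n, rfl⟩ := Nat.exists_eq_add_of_le hmpos
      subst hm
      have hval : runSumR A ![1, 0] (1 + n + (1 + n)) (x n) =
          ((n : ℝ) + 1) • (![1, 0] : Fin 2 → ℝ) := by
        rw [show 1 + n + (1 + n) = 2 * n + 2 by ring]
        exact part2 n
      calc (((1 + n + (1 + n)) / 2 : ℕ) : ℝ) = (n : ℝ) + 1 := by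
            rw [show (1 + n + (1 + n)) / 2 = n + 1 by omega]
            push_cast
            ring
        _ = eucNorm (runSumR A ![1, 0] (1 + n + (1 + n)) (x n)) := by
            rw [hval, eucNorm_smul_e1 _ (by positivity)]
        _ ≤ _ := hsup (x n) ⟨(hxb n).1, (hxb n).2⟩
  · rcases Nat.eq_zero_or_pos m with rfl | hmpos
    · subst hm
      simpa using hnn
    · obtain ⟨n, rfl⟩ := Nat.exists_eq_add_of_le hmpos
      subst hm
      have hval : runSumR A ![1, 0] (2 * (1 + n) + 1) (x n) =
          ((n : ℝ) + 2) • (![1, 0] : Fin 2 → ℝ) := by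
        rw [show 2 * (1 + n) + 1 = 2 * n + 3 by ring]
        exact hodd n
      calc (((2 * (1 + n) + 1) / 2 : ℕ) : ℝ) ≤ (n : ℝ) + 2 := by
            rw [show (2 * (1 + n) + 1) / 2 = n + 1 by omega]
            push_cast
            linarith
        _ = eucNorm (runSumR A ![1, 0] (2 * (1 + n) + 1) (x n)) := by
            rw [hval, eucNorm_smul_e1 _ (by positivity)]
        _ ≤ _ := hsup (x n) ⟨(hxb n).1, (hxb n).2⟩
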